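/- For pattern (SEQ(A+,B))+ under the contiguous semantics, the pattern-grained algorithm that resets the last-event count to 0 upon any non-matching event correctly counts contiguous trends; on the stream a1,b2,a3,a4,c5,b6,a7,b8 the final count is 2. -/

import Mathlib

attribute [local instance] Classical.propDecidable

inductive Lab where
  | A | B | C
deriving DecidableEq

/-- A block matched by `SEQ(A+, B)`: one or more `A`s followed by one `B`. -/
inductive Blk : List Lab → Prop where
  | mk (k : ℕ) (hk : 1 ≤ k) : Blk (List.replicate k Lab.A ++ [Lab.B])

/-- A trend matched by `(SEQ(A+, B))+`: a concatenation of one or more blocks. -/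
inductive Pat : List Lab → Prop where
  | one {s : List Lab} : Blk s → Pat s
  | cons {s t : List Lab} : Blk s → Pat t → Pat (s ++ t)

/-- A contiguous trend: a consecutive run (infix) of the position-labelled stream whose
labels match the pattern `(SEQ(A+,B))+`. -/
def ContTrend (stream tr : List (ℕ × Lab)) : Prop :=
  tr <:+: stream ∧ Pat (tr.map Prod.snd)

/-- The pattern-grained algorithm under the contiguous semantics for `(SEQ(A+,B))+`.
As under skip-till-next-match, except that upon any non-matching event the last matched
event and its count are reset to null/0, while the final count is retained. -/
def stepCont (s : Option Lab × ℕ × ℕ) (x : Lab) : Option Lab × ℕ × ℕ :=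
  match x with
  | Lab.A => (some Lab.A,
      1 + (if s.1 = some Lab.A ∨ s.1 = some Lab.B then s.2.1 else 0), s.2.2)
  | Lab.B => if s.1 = some Lab.A then (some Lab.B, s.2.1, s.2.2 + s.2.1)
             else (none, 0, s.2.2)
  | Lab.C => (none, 0, s.2.2)


/-- partial pattern: zero or more blocks followed by one or more A's -/
inductive PA : List Lab → Prop where
  | as (k : ℕ) (hk : 1 ≤ k) : PA (List.replicate k Lab.A)
  | cons {s t : List Lab} : Blk s → PA t → PA (s ++ t)

theorem pat_last {s : List Lab} (h : Pat s) : ∃ u, s = u ++ [Lab.B] := by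
  induction h with
  | one hb => obtain ⟨k, hk⟩ := hb; exact ⟨_, rfl⟩
  | cons hb _ ih => obtain ⟨u, rfl⟩ := ih; exact ⟨_, (List.append_assoc _ _ _).symm⟩

theorem pa_last {s : List Lab} (h : PA s) : ∃ u, s = u ++ [Lab.A] := by
  induction h with
  | as k hk =>
    refine ⟨List.replicate (k-1) Lab.A, ?_⟩
    rw [← List.replicate_succ']
    congr 1; omega
  | cons hb _ ih => obtain ⟨u, rfl⟩ := ih; exact ⟨_, (List.append_assoc _ _ _).symm⟩

theorem not_pat_nil : ¬ Pat [] := by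
  intro h; obtain ⟨u, hu⟩ := pat_last h; simp at hu

theorem not_pa_nil : ¬ PA [] := by
  intro h; obtain ⟨u, hu⟩ := pa_last h; simp at hu

theorem last_ne {s t : List Lab} {a b : Lab} (h : s ++ [a] = t ++ [b]) : a = b := by
  have := congrArg List.getLast? h
  simpa [List.getLast?_concat] using this

theorem not_pat_A (t : List Lab) : ¬ Pat (t ++ [Lab.A]) := by
  intro h; obtain ⟨u, hu⟩ := pat_last h; exact Lab.noConfusion (last_ne hu)

theorem not_pat_C (t : List Lab) : ¬ Pat (t ++ [Lab.C]) := by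
  intro h; obtain ⟨u, hu⟩ := pat_last h; exact Lab.noConfusion (last_ne hu)

theorem not_pa_B (t : List Lab) : ¬ PA (t ++ [Lab.B]) := by
  intro h; obtain ⟨u, hu⟩ := pa_last h; exact Lab.noConfusion (last_ne hu)

theorem not_pa_C (t : List Lab) : ¬ PA (t ++ [Lab.C]) := by
  intro h; obtain ⟨u, hu⟩ := pa_last h; exact Lab.noConfusion (last_ne hu)

theorem pa_appA_aux {s : List Lab} (h : PA s) :
    ∀ t, s = t ++ [Lab.A] → PA t ∨ Pat t ∨ t = [] := by
  induction h with
  | as k hk =>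
    intro t ht
    have hrep : List.replicate k Lab.A = List.replicate (k-1) Lab.A ++ [Lab.A] := by
      rw [← List.replicate_succ']; congr 1; omega
    rw [hrep] at ht
    have := List.append_cancel_right ht
    subst this
    rcases Nat.eq_or_lt_of_le hk with h1 | h1
    · right; right; simp [← h1]
    · left; exact PA.as (k-1) (by omega)
  | cons hb hpa ih =>
    intro t ht
    obtain ⟨u, rfl⟩ := pa_last hpa
    rw [← List.append_assoc] at ht
    have := List.append_cancel_right ht.symm
    subst this
    rcases ih u rfl with h | h | rfl
    · exact Or.inl (PA.cons hb h)
    · exact Or.inr (Or.inl (Pat.cons hb h))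
    · exact Or.inr (Or.inl (by simpa using Pat.one hb))

theorem pa_appA (t : List Lab) : PA (t ++ [Lab.A]) ↔ PA t ∨ Pat t ∨ t = [] := by
  constructor
  · exact fun h => pa_appA_aux h t rfl
  · rintro (h | h | rfl)
    · induction h with
      | as k hk =>
        rw [show List.replicate k Lab.A ++ [Lab.A] = List.replicate (k+1) Lab.A by
          rw [List.replicate_succ']]
        exact PA.as (k+1) (by omega)
      | cons hb _ ih => rw [List.append_assoc]; exact PA.cons hb ih
    · induction h with
      | one hb =>
        exact PA.cons hb (show PA [Lab.A] from PA.as 1 le_rfl)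
      | cons hb _ ih => rw [List.append_assoc]; exact PA.cons hb ih
    · exact PA.as 1 le_rfl

theorem pat_appB_aux {s : List Lab} (h : Pat s) :
    ∀ t, s = t ++ [Lab.B] → PA t := by
  induction h with
  | one hb =>
    intro t ht
    obtain ⟨k, hk⟩ := hb
    have := List.append_cancel_right ht.symm
    subst this
    exact PA.as k hk
  | cons hb hp ih =>
    intro t ht
    obtain ⟨u, rfl⟩ := pat_last hp
    rw [← List.append_assoc] at ht
    have := List.append_cancel_right ht.symm
    subst this
    exact PA.cons hb (ih u rfl)

theorem pat_appB (t : List Lab) : Pat (t ++ [Lab.B]) ↔ PA t := by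
  constructor
  · exact fun h => pat_appB_aux h t rfl
  · intro h
    induction h with
    | as k hk => exact Pat.one (Blk.mk k hk)
    | cons hb _ ih => rw [List.append_assoc]; exact Pat.cons hb ih

noncomputable def suffA (p : List Lab) : ℕ := p.tails.countP fun t => decide (PA t)
noncomputable def suffB (p : List Lab) : ℕ := p.tails.countP fun t => decide (Pat t)
noncomputable def patCount (p : List Lab) : ℕ :=
  (p.tails.flatMap List.inits).countP fun t => decide (Pat t)

theorem tails_concat (p : List Lab) (x : Lab) :
    (p ++ [x]).tails = p.tails.map (· ++ [x]) ++ [[]] := by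
  simp [List.tails_append]

theorem suff_concat (q : List Lab → Bool) (hq : q [] = false) (p : List Lab) (x : Lab) :
    (p ++ [x]).tails.countP q = p.tails.countP fun t => q (t ++ [x]) := by
  rw [tails_concat, List.countP_append, List.countP_map]
  simp [hq, Function.comp_def]

theorem countP_eq_sum_map {α : Type*} (l : List α) (q : α → Bool) :
    l.countP q = (l.map fun a => if q a then 1 else 0).sum := by
  induction l with
  | nil => simp
  | cons a l ih => rw [List.countP_cons, List.map_cons, List.sum_cons, ih]; omega

theorem sum_map_add {α : Type*} (l : List α) (f g : α → ℕ) :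
    (l.map fun a => f a + g a).sum = (l.map f).sum + (l.map g).sum := by
  induction l with
  | nil => simp
  | cons a l ih => simp [ih]; omega

theorem patCount_concat (p : List Lab) (x : Lab) :
    patCount (p ++ [x]) = patCount p + suffB (p ++ [x]) := by
  unfold patCount suffB
  rw [tails_concat, List.flatMap_append, List.countP_append]
  have h2 : (([([] : List Lab)]).flatMap List.inits) = [[]] := by simp
  have h3 : List.countP (fun t => decide (Pat t)) [([] : List Lab)] = 0 := by
    simp [not_pat_nil]
  rw [h2, h3, Nat.add_zero]
  rw [List.countP_flatMap, List.map_map]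
  have h4 : ∀ t ∈ p.tails, (fun t => List.countP (fun t => decide (Pat t)) (t ++ [x]).inits) t
      = (fun t => List.countP (fun t => decide (Pat t)) t.inits) t
        + (fun t => if decide (Pat (t ++ [x])) then 1 else 0) t := by
    intro t _
    simp only [List.inits_append]
    rw [List.countP_append]
    congr 1
    simp [List.countP_cons]
  simp only [Function.comp_def]
  rw [List.map_congr_left h4, sum_map_add]
  have h6 : (List.map (fun t => List.countP (fun t => decide (Pat t)) t.inits) p.tails).sum
      = List.countP (fun t => decide (Pat t)) (p.tails.flatMap List.inits) := by
    rw [List.countP_flatMap]; simp [Function.comp_def]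
  rw [h6]
  congr 1
  rw [List.countP_append, List.countP_map]
  have h5 : List.countP (fun t => decide (Pat t)) [([] : List Lab)] = 0 := h3
  rw [h5, Nat.add_zero, countP_eq_sum_map]
  simp [Function.comp_def]

theorem count_split (l : List (List Lab)) :
    (l.countP fun t => decide (PA t) || decide (Pat t) || t.isEmpty) =
      (l.countP fun t => decide (PA t)) + (l.countP fun t => decide (Pat t))
        + (l.countP fun t => t.isEmpty) := by
  induction l with
  | nil => simp
  | cons a l ih =>
    have d1 : ¬(PA a ∧ Pat a) := by
      rintro ⟨h1, h2⟩; obtain ⟨u, rfl⟩ := pa_last h1; exact not_pat_A u h2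
    have d2 : ¬(PA a ∧ a = []) := by rintro ⟨h1, rfl⟩; exact not_pa_nil h1
    have d3 : ¬(Pat a ∧ a = []) := by rintro ⟨h1, rfl⟩; exact not_pat_nil h1
    simp only [List.countP_cons, ih]
    rcases Classical.em (PA a) with h1 | h1 <;> rcases Classical.em (Pat a) with h2 | h2 <;>
      rcases Classical.em (a = []) with h3 | h3 <;>
      [ exact absurd ⟨h1, h2⟩ d1; exact absurd ⟨h1, h2⟩ d1;
        exact absurd ⟨h1, h3⟩ d2; skip; exact absurd ⟨h2, h3⟩ d3; skip; skip; skip ] <;>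
      simp_all [List.isEmpty_iff] <;> omega

theorem countP_tails_nil {α : Type*} (p : List α) :
    p.tails.countP (fun t => t.isEmpty) = 1 := by
  induction p with
  | nil => simp
  | cons a l ih => rw [List.tails_cons, List.countP_cons]; simp [ih]

theorem suffA_concat_A (p : List Lab) :
    suffA (p ++ [Lab.A]) = suffA p + suffB p + 1 := by
  unfold suffA suffB
  rw [suff_concat _ (by simp [not_pa_nil]) p Lab.A]
  have : (p.tails.countP fun t => decide (PA (t ++ [Lab.A])))
      = p.tails.countP fun t => decide (PA t) || decide (Pat t) || t.isEmpty := by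
    apply List.countP_congr
    intro t _
    simp [pa_appA, List.isEmpty_iff, or_assoc]
  rw [this, count_split, countP_tails_nil]

theorem suffB_concat_A (p : List Lab) : suffB (p ++ [Lab.A]) = 0 := by
  unfold suffB
  rw [suff_concat _ (by simp [not_pat_nil]) p Lab.A]
  simp [List.countP_eq_zero, not_pat_A]

theorem suffB_concat_B (p : List Lab) : suffB (p ++ [Lab.B]) = suffA p := by
  unfold suffA suffB
  rw [suff_concat _ (by simp [not_pat_nil]) p Lab.B]
  apply List.countP_congr
  intro t _
  simp only [decide_eq_true_eq]
  exact pat_appB t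

theorem suffA_concat_B (p : List Lab) : suffA (p ++ [Lab.B]) = 0 := by
  unfold suffA
  rw [suff_concat _ (by simp [not_pa_nil]) p Lab.B]
  simp [List.countP_eq_zero, not_pa_B]

theorem suffA_concat_C (p : List Lab) : suffA (p ++ [Lab.C]) = 0 := by
  unfold suffA
  rw [suff_concat _ (by simp [not_pa_nil]) p Lab.C]
  simp [List.countP_eq_zero, not_pa_C]

theorem suffB_concat_C (p : List Lab) : suffB (p ++ [Lab.C]) = 0 := by
  unfold suffB
  rw [suff_concat _ (by simp [not_pat_nil]) p Lab.C]
  simp [List.countP_eq_zero, not_pat_C]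

theorem suffA_nil : suffA [] = 0 := by simp [suffA, not_pa_nil]
theorem suffB_nil : suffB [] = 0 := by simp [suffB, not_pat_nil]
theorem patCount_nil : patCount [] = 0 := by simp [patCount, not_pat_nil]

theorem fold_inv (p : List Lab) :
    (p.foldl stepCont (none, 0, 0)).2.2 = patCount p ∧
      (((p.foldl stepCont (none, 0, 0)).1 = some Lab.A ∧
          (p.foldl stepCont (none, 0, 0)).2.1 = suffA p ∧ suffB p = 0) ∨
       ((p.foldl stepCont (none, 0, 0)).1 = some Lab.B ∧
          (p.foldl stepCont (none, 0, 0)).2.1 = suffB p ∧ suffA p = 0) ∨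
       ((p.foldl stepCont (none, 0, 0)).1 = none ∧
          (p.foldl stepCont (none, 0, 0)).2.1 = 0 ∧ suffA p = 0 ∧ suffB p = 0)) := by
  induction p using List.reverseRecOn with
  | nil => exact ⟨patCount_nil.symm, Or.inr (Or.inr ⟨rfl, rfl, suffA_nil, suffB_nil⟩)⟩
  | append_singleton p x ih =>
    obtain ⟨hfin, hcase⟩ := ih
    rw [List.foldl_append]
    cases x with
    | A =>
      simp only [stepCont, List.foldl]
      refine ⟨?_, Or.inl ⟨by trivial, ?_, suffB_concat_A p⟩⟩
      · rw [patCount_concat, suffB_concat_A]; simpa using hfin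
      · show 1 + _ = suffA (p ++ [Lab.A])
        rw [suffA_concat_A]
        rcases hcase with ⟨h1, h2, h3⟩ | ⟨h1, h2, h3⟩ | ⟨h1, h2, h3, h4⟩
        · rw [if_pos (Or.inl h1), h2, h3]; omega
        · rw [if_pos (Or.inr h1), h2, h3]; omega
        · rw [if_neg (by rw [h1]; simp), h3, h4]
    | B =>
      simp only [stepCont, List.foldl]
      rcases hcase with ⟨h1, h2, h3⟩ | ⟨h1, h2, h3⟩ | ⟨h1, h2, h3, h4⟩
      · rw [if_pos h1]
        refine ⟨?_, Or.inr (Or.inl ⟨by trivial, ?_, suffA_concat_B p⟩)⟩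
        · show _ + _ = _
          rw [patCount_concat, suffB_concat_B, hfin, h2]
        · show _ = suffB (p ++ [Lab.B])
          rw [suffB_concat_B, h2]
      · rw [if_neg (by rw [h1]; simp)]
        refine ⟨?_, Or.inr (Or.inr ⟨by trivial, by trivial, suffA_concat_B p, ?_⟩)⟩
        · show _ = _
          rw [patCount_concat, suffB_concat_B, hfin, h3]; omega
        · rw [suffB_concat_B, h3]
      · rw [if_neg (by rw [h1]; simp)]
        refine ⟨?_, Or.inr (Or.inr ⟨by trivial, by trivial, suffA_concat_B p, ?_⟩)⟩
        · show _ = _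
          rw [patCount_concat, suffB_concat_B, hfin, h3]; omega
        · rw [suffB_concat_B, h3]
    | C =>
      simp only [stepCont, List.foldl]
      refine ⟨?_, Or.inr (Or.inr ⟨by trivial, by trivial, suffA_concat_C p, suffB_concat_C p⟩)⟩
      show _ = _
      rw [patCount_concat, suffB_concat_C, hfin]; omega

theorem nodup_tails {α : Type*} (l : List α) : l.tails.Nodup := by
  induction l with
  | nil => simp
  | cons a l ih =>
    rw [List.tails_cons]
    refine List.nodup_cons.2 ⟨?_, ih⟩
    intro h
    have := ((List.mem_tails _ _).1 h).sublist.length_le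
    simp only [List.length_cons] at this; omega

theorem nodup_inits {α : Type*} (l : List α) : l.inits.Nodup := by
  induction l with
  | nil => simp
  | cons a l ih =>
    rw [List.inits_cons]
    refine List.nodup_cons.2 ⟨?_, ih.map fun x y h => by injection h⟩
    simp

theorem no_two {α : Type*} {x t₁ t₂ : List α} (hx : x ≠ []) (h1 : x <+: t₁) (h2 : x <+: t₂)
    (hs : t₁ <:+ t₂) (hnd : t₂.Nodup) (hne : t₁ ≠ t₂) : False := by
  obtain ⟨c, rfl⟩ := hs
  have hc : c ≠ [] := by rintro rfl; simp at hne
  obtain ⟨h, x', rfl⟩ := List.exists_cons_of_ne_nil hx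
  obtain ⟨r1, hr1⟩ := h1
  obtain ⟨r2, hr2⟩ := h2
  obtain ⟨hh, c', rfl⟩ := List.exists_cons_of_ne_nil hc
  have hhh : hh = h := by
    have := congrArg List.head? hr2
    simpa using this.symm
  subst hhh
  have hmem : hh ∈ t₁ := by rw [← hr1]; simp
  rw [List.cons_append] at hnd
  have := (List.nodup_cons.1 hnd).1
  exact this (List.mem_append.2 (Or.inr hmem))

theorem bridge (stream : List Lab) :
    (stream.zipIdx.map Prod.swap).sublists.countP
      (fun tr => decide (ContTrend (stream.zipIdx.map Prod.swap) tr)) =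
      patCount stream := by
  classical
  set e := stream.zipIdx.map Prod.swap with he
  have hnd : e.Nodup := (show (e.map Prod.fst).Nodup by
    rw [he, List.map_map]
    show (stream.zipIdx.map Prod.snd).Nodup
    rw [List.zipIdx_map_snd]; exact List.nodup_range').of_map
  set Q : List (ℕ × Lab) → Bool := fun t => decide (Pat (t.map Prod.snd)) with hQ
  set P : List (ℕ × Lab) → Bool := fun tr => decide (ContTrend e tr) with hP
  -- Step 1: countP P sublists = countP Q (tails.flatMap inits)
  have hQnil : ∀ x : List (ℕ × Lab), Q x = true → x ≠ [] := by
    rintro x hq rfl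
    simp only [hQ, List.map_nil, decide_eq_true_eq] at hq
    exact not_pat_nil hq
  have d1 : (e.sublists.filter P).Nodup := (List.nodup_sublists.2 hnd).filter P
  have d2 : ((e.tails.flatMap List.inits).filter Q).Nodup := by
    rw [List.filter_flatMap]
    rw [List.nodup_flatMap]
    constructor
    · intro t _; exact (nodup_inits t).filter Q
    · refine (nodup_tails e).imp_of_mem ?_
      intro t₁ t₂ h₁ h₂ hne
      rw [Function.onFun]
      rw [List.disjoint_left]
      intro x hx1 hx2
      rw [List.mem_filter] at hx1 hx2
      have hxne : x ≠ [] := hQnil x hx1.2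
      have hp1 : x <+: t₁ := (List.mem_inits _ _).1 hx1.1
      have hp2 : x <+: t₂ := (List.mem_inits _ _).1 hx2.1
      have hs1 : t₁ <:+ e := (List.mem_tails _ _).1 h₁
      have hs2 : t₂ <:+ e := (List.mem_tails _ _).1 h₂
      rcases List.suffix_or_suffix_of_suffix hs1 hs2 with hs | hs
      · exact no_two hxne hp1 hp2 hs (hs2.sublist.nodup hnd) hne
      · exact no_two hxne hp2 hp1 hs (hs1.sublist.nodup hnd) (Ne.symm hne)
  have hmemiff : ∀ x, x ∈ e.sublists.filter P ↔ x ∈ (e.tails.flatMap List.inits).filter Q := by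
    intro x
    rw [List.mem_filter, List.mem_filter, List.mem_sublists, List.mem_flatMap]
    constructor
    · rintro ⟨-, hpx⟩
      have hct : ContTrend e x := by simpa [hP] using hpx
      obtain ⟨hinf, hpat⟩ := hct
      obtain ⟨t, hpt, hte⟩ := List.infix_iff_prefix_suffix.1 hinf
      exact ⟨⟨t, (List.mem_tails _ _).2 hte, (List.mem_inits _ _).2 hpt⟩,
        by simpa [hQ] using hpat⟩
    · rintro ⟨⟨t, ht, hxt⟩, hqx⟩
      have hinf : x <:+: e := List.infix_iff_prefix_suffix.2
        ⟨t, (List.mem_inits _ _).1 hxt, (List.mem_tails _ _).1 ht⟩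
      have hpat : Pat (x.map Prod.snd) := by simpa [hQ] using hqx
      exact ⟨hinf.sublist, by
        show decide (ContTrend e x) = true; exact decide_eq_true ⟨hinf, hpat⟩⟩
  have hperm := (List.perm_ext_iff_of_nodup d1 d2).2 hmemiff
  rw [List.countP_eq_length_filter, hperm.length_eq, ← List.countP_eq_length_filter]
  -- Step 2: countP Q (e.tails.flatMap inits) = patCount stream
  have hmapped : (e.tails.flatMap List.inits).map (List.map Prod.snd)
      = stream.tails.flatMap List.inits := by
    rw [List.map_flatMap]
    have : ∀ t : List (ℕ × Lab), (t.inits).map (List.map Prod.snd)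
        = (t.map Prod.snd).inits := fun t => (List.map_inits _).symm
    calc e.tails.flatMap (fun t => (t.inits).map (List.map Prod.snd))
        = e.tails.flatMap (fun t => (t.map Prod.snd).inits) := by
          simp only [this]
      _ = (e.tails.map (List.map Prod.snd)).flatMap List.inits := by
          rw [List.flatMap_map]
      _ = ((e.map Prod.snd).tails).flatMap List.inits := by
          rw [← List.map_tails]
      _ = stream.tails.flatMap List.inits := by
          rw [he, List.map_map]
          show ((stream.zipIdx.map Prod.fst).tails).flatMap List.inits = _
          rw [List.zipIdx_map_fst]
  have : List.countP Q (e.tails.flatMap List.inits)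
      = List.countP (fun t => decide (Pat t))
          ((e.tails.flatMap List.inits).map (List.map Prod.snd)) := by
    rw [List.countP_map]; rfl
  rw [this, hmapped]
  rfl

/-- For `(SEQ(A+,B))+` under the contiguous semantics, the pattern-grained algorithm
that resets the last-event count upon any non-matching event correctly counts contiguous
trends; on the stream `a1,b2,a3,a4,c5,b6,a7,b8` the final count is `2`. -/
theorem stmt9 :
    (∀ stream : List Lab,
      (stream.foldl stepCont (none, 0, 0)).2.2 =
        (stream.zipIdx.map Prod.swap).sublists.countP
          (fun tr => decide (ContTrend (stream.zipIdx.map Prod.swap) tr))) ∧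
    (([Lab.A, Lab.B, Lab.A, Lab.A, Lab.C, Lab.B, Lab.A, Lab.B] : List Lab).foldl
        stepCont (none, 0, 0)).2.2 = 2 := by
  refine ⟨fun stream => (fold_inv stream).1.trans (bridge stream).symm, ?_⟩
  simp [List.foldl, stepCont]
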